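/- In the superstar setting, if the permutation distribution satisfies P[σ^i] ≥ P[σ^j] for all i < j (expected value descending in rank), then for any realized free/busy status vector s with s_i = s_j for i < j, the posterior expected value at rank i is at least that at rank j: E[v_{σ_i} | s] ≥ E[v_{σ_j} | s]. Consequently the optimal choice is always either the top-ranked free candidate or the top-ranked busy candidate. -/
import Mathlib


open Finset

/-- Superstar setting with `n` candidates, one of value `v₁` and
the rest of value `v₂ ≤ v₁`; the high-value candidate is free with
probability `p₁`, low-value candidates with probability `p₂ ≥ p₁`,
independently.  `P k` is the probability the high-value candidate is at rank
`k`, `s` is the realized free/busy status vector, and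
`L k = P[s | σ^k]` is the likelihood of `s` given the high-value candidate at
rank `k`.  If `P` is descending in rank and `s i = s j` for ranks `i < j`,
then the posterior expected value at rank `i` is at least that at rank `j`,
and hence (dividing by the busy penalty `γ ≥ 1` when busy) picking rank `i`
is weakly better than picking rank `j`: the optimal choice is always the
top-ranked free or top-ranked busy candidate. -/
theorem stmt5
    (n : ℕ) (v₁ v₂ p₁ p₂ γ : ℝ)
    (P : Fin n → ℝ) (s : Fin n → Bool) (L : Fin n → ℝ)
    (hv : v₂ ≤ v₁)
    (hp₁ : 0 ≤ p₁) (hp₁₂ : p₁ ≤ p₂) (hp₂ : p₂ ≤ 1)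
    (hγ : 1 ≤ γ)
    (hPnonneg : ∀ k, 0 ≤ P k)
    (hPanti : ∀ a b : Fin n, a ≤ b → P b ≤ P a)
    (hL : ∀ k, L k =
      (if s k then p₁ else 1 - p₁) *
        ∏ m ∈ Finset.univ.erase k, (if s m then p₂ else 1 - p₂))
    (hZ : 0 < ∑ k, L k * P k)
    (i j : Fin n) (hij : i < j) (hs : s i = s j) :
    ((∑ k, L k * P k * (if i = k then v₁ else v₂)) / (∑ k, L k * P k) ≥
        (∑ k, L k * P k * (if j = k then v₁ else v₂)) / (∑ k, L k * P k)) ∧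
      ((∑ k, L k * P k * (if i = k then v₁ else v₂)) / (∑ k, L k * P k) /
            (if s i then 1 else γ) ≥
        (∑ k, L k * P k * (if j = k then v₁ else v₂)) / (∑ k, L k * P k) /
            (if s j then 1 else γ)) := by
  have hne : i ≠ j := ne_of_lt hij
  set g : Fin n → ℝ := fun m => if s m then p₂ else 1 - p₂ with hg
  -- L i = L j
  have hLij : L i = L j := by
    rw [hL i, hL j]
    have hj : j ∈ Finset.univ.erase i := by
      simp [Finset.mem_erase, hne.symm]
    have hi : i ∈ Finset.univ.erase j := by
      simp [Finset.mem_erase, hne]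
    rw [← Finset.mul_prod_erase _ _ hj, ← Finset.mul_prod_erase _ _ hi]
    rw [Finset.erase_right_comm]
    rw [hs]
  -- L nonneg
  have hLnn : ∀ k, 0 ≤ L k := by
    intro k
    rw [hL k]
    apply mul_nonneg
    · split <;> linarith
    · apply Finset.prod_nonneg
      intro m _
      split <;> linarith
  -- key rewriting of the numerator
  have key : ∀ t : Fin n, (∑ k, L k * P k * (if t = k then v₁ else v₂)) =
      (∑ k, L k * P k) * v₂ + L t * P t * (v₁ - v₂) := by
    intro t
    have h1 : ∀ k : Fin n, L k * P k * (if t = k then v₁ else v₂) =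
        L k * P k * v₂ + (if t = k then L k * P k * (v₁ - v₂) else 0) := by
      intro k
      by_cases h : t = k <;> simp [h] <;> ring
    simp_rw [h1]
    rw [Finset.sum_add_distrib, Finset.sum_ite_eq, Finset.sum_mul]
    simp
  have hnum : (∑ k, L k * P k * (if j = k then v₁ else v₂)) ≤
      (∑ k, L k * P k * (if i = k then v₁ else v₂)) := by
    rw [key i, key j]
    have hP : P j ≤ P i := hPanti i j hij.le
    have : L j * P j ≤ L i * P i := by
      rw [hLij]
      exact mul_le_mul_of_nonneg_left hP (hLnn j)
    nlinarith
  have h1 : ((∑ k, L k * P k * (if i = k then v₁ else v₂)) / (∑ k, L k * P k) ≥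
      (∑ k, L k * P k * (if j = k then v₁ else v₂)) / (∑ k, L k * P k)) :=
    div_le_div_of_nonneg_right hnum hZ.le |>.trans_eq rfl
  refine ⟨h1, ?_⟩
  rw [hs]
  have hc : (0:ℝ) < if s j then 1 else γ := by split <;> linarith
  exact div_le_div_of_nonneg_right h1 hc.le
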